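/- Let F be a field and let L ∈ F^{n×n} be a matrix that is NOT lower triangular, i.e., L_{i,j} ≠ 0 for some j > i. Let S' be a finite nonempty subset of F \ {0}, and let d_1, …, d_n be chosen independently and uniformly at random from S', with D = Diag(d_1, …, d_n). Then the probability that the representative Laurent polynomial P_{L·D}(X) has no nonzero coefficient of negative degree (i.e., is a polynomial in X) is at most 1/|S'|. Equivalently, with probability at least 1 − 1/|S'|, P_{L·D} has a nonzero coefficient of negative degree. -/

import Mathlib

open Matrix LaurentPolynomial

variable {F : Type*} [Field F]

/-- The representative Laurent polynomial of an `m×n` matrix `M` (1-based indices):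
`P_M(X) = Σ_{i=1}^m Σ_{j=1}^n M_{i,j} X^{i−j}`. -/
noncomputable def repLaurent {m n : ℕ} (M : Matrix (Fin m) (Fin n) F) :
    LaurentPolynomial F :=
  ∑ i : Fin m, ∑ j : Fin n,
    LaurentPolynomial.C (M i j) * LaurentPolynomial.T ((i : ℤ) - (j : ℤ))

lemma repLaurent_apply {m n : ℕ} (M : Matrix (Fin m) (Fin n) F) (t : ℤ) :
    (repLaurent M).coeff t =
      ∑ i : Fin m, ∑ j : Fin n, if (i : ℤ) - (j : ℤ) = t then M i j else 0 := by
  simp only [repLaurent, ← single_eq_C_mul_T]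
  rw [AddMonoidAlgebra.coeff_sum, Finset.sum_apply']
  refine Finset.sum_congr rfl fun i _ => ?_
  rw [AddMonoidAlgebra.coeff_sum, Finset.sum_apply']
  exact Finset.sum_congr rfl fun j _ => Finsupp.single_apply

open Classical in
/-- if `L` is not lower triangular and `D = Diag(d₁,…,dₙ)` with the
`dᵢ` drawn independently and uniformly from a finite set `S' ⊆ F \ {0}`, then the
probability that `P_{L·D}` has no nonzero coefficient of negative degree (i.e. is a
polynomial) is at most `1/|S'|`, expressed as:
`#{d ∈ S'^n | P_{L·D} is a polynomial} · |S'| ≤ |S'^n|`. -/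
theorem prob_repLaurent_polynomial_le {n : ℕ}
    (L : Matrix (Fin n) (Fin n) F)
    (hL : ∃ i j : Fin n, i < j ∧ L i j ≠ 0)
    (S' : Finset F) (hS' : S'.Nonempty) (h0 : (0 : F) ∉ S') :
    ((Fintype.piFinset fun _ : Fin n => S').filter
        fun d => ∃ p : Polynomial F,
          p.toLaurent = repLaurent (L * Matrix.diagonal d)).card * S'.card ≤
      (Fintype.piFinset fun _ : Fin n => S').card := by
  obtain ⟨i0, j0, hij, hL0⟩ := hL
  obtain ⟨d0, hd0⟩ := hS'
  set k : ℤ := (j0 : ℤ) - (i0 : ℤ) with hk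
  have hkpos : 0 < k := by
    have : (i0 : ℤ) < (j0 : ℤ) := by exact_mod_cast hij
    omega
  -- coefficient of X^{-k} as a function of d
  set φ : (Fin n → F) → F := fun d =>
    ∑ j : Fin n, (∑ i : Fin n, if (i : ℤ) - (j : ℤ) = -k then L i j else 0) * d j with hφ
  have hcoeff : ∀ d : Fin n → F, (repLaurent (L * Matrix.diagonal d)).coeff (-k) = φ d := by
    intro d
    rw [repLaurent_apply, Finset.sum_comm]
    refine Finset.sum_congr rfl fun j _ => ?_
    rw [Finset.sum_mul]
    refine Finset.sum_congr rfl fun i _ => ?_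
    rw [Matrix.mul_diagonal]
    split <;> simp
  -- the φ-value of any d in the filtered set is zero
  have hzero : ∀ d ∈ (Fintype.piFinset fun _ : Fin n => S').filter
      fun d => ∃ p : Polynomial F,
        p.toLaurent = repLaurent (L * Matrix.diagonal d), φ d = 0 := by
    intro d hd
    obtain ⟨-, p, hp⟩ := Finset.mem_filter.mp hd
    rw [← hcoeff, ← hp, Polynomial.toLaurent_apply]
    refine Finsupp.mapDomain_notin_range _ _ ?_
    rintro ⟨m, hm⟩
    omega
  -- the coefficient of d j0 in φ is L i0 j0 ≠ 0
  have hc : (∑ i : Fin n, if (i : ℤ) - (j0 : ℤ) = -k then L i j0 else 0) = L i0 j0 := by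
    have : ∀ i : Fin n, ((i : ℤ) - (j0 : ℤ) = -k ↔ i = i0) := by
      intro i
      constructor
      · intro h
        have : (i : ℕ) = (i0 : ℕ) := by omega
        exact Fin.ext this
      · rintro rfl; omega
    calc (∑ i : Fin n, if (i : ℤ) - (j0 : ℤ) = -k then L i j0 else 0)
        = ∑ i : Fin n, if i = i0 then L i j0 else 0 :=
          Finset.sum_congr rfl fun i _ => if_congr (this i) rfl rfl
      _ = L i0 j0 := by rw [Finset.sum_ite_eq']; simp
  -- counting via injection into a smaller product set
  set T : Finset (Fin n → F) :=
    Fintype.piFinset fun j => if j = j0 then ({d0} : Finset F) else S' with hT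
  have hcard : (Finset.filter (fun d => ∃ p : Polynomial F,
      p.toLaurent = repLaurent (L * Matrix.diagonal d))
      (Fintype.piFinset fun _ : Fin n => S')).card ≤ T.card := by
    apply Finset.card_le_card_of_injOn (fun d => Function.update d j0 d0)
    · intro d hd
      have hd' := (Finset.mem_filter.mp hd).1
      rw [Fintype.mem_piFinset] at hd'
      rw [Finset.mem_coe, hT, Fintype.mem_piFinset]
      intro j
      by_cases h : j = j0
      · subst h; simp [hd0]
      · simp [Function.update_of_ne h, h, hd' j]
    · intro d hd d' hd' heq
      have hoff : ∀ j : Fin n, j ≠ j0 → d j = d' j := by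
        intro j hj
        have := congrFun heq j
        simpa [Function.update_of_ne hj] using this
      have hφd := hzero d hd
      have hφd' := hzero d' hd'
      simp only [hφ] at hφd hφd'
      have hj0 : d j0 = d' j0 := by
        have hsum : (∑ j : Fin n, (∑ i : Fin n, if (i : ℤ) - (j : ℤ) = -k then L i j else 0) * d j)
            - (∑ j : Fin n, (∑ i : Fin n, if (i : ℤ) - (j : ℤ) = -k then L i j else 0) * d' j) = 0 := by
          rw [hφd, hφd', sub_zero]
        rw [← Finset.sum_sub_distrib] at hsum
        have hsum2 : ∀ j ∈ (Finset.univ : Finset (Fin n)), j ≠ j0 →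
            (∑ i : Fin n, if (i : ℤ) - (j : ℤ) = -k then L i j else 0) * d j
            - (∑ i : Fin n, if (i : ℤ) - (j : ℤ) = -k then L i j else 0) * d' j = 0 := by
          intro j _ hj
          rw [hoff j hj, sub_self]
        rw [Finset.sum_eq_single_of_mem j0 (Finset.mem_univ _) hsum2, hc] at hsum
        exact mul_left_cancel₀ hL0 (sub_eq_zero.mp hsum)
      funext j
      by_cases h : j = j0
      · rw [h]; exact hj0
      · exact hoff j h
  have hTcard : T.card * S'.card ≤ (Fintype.piFinset fun _ : Fin n => S').card := by
    rw [hT, Fintype.card_piFinset, Fintype.card_piFinset]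
    rw [← Finset.prod_erase_mul _ _ (Finset.mem_univ j0)]
    have h1 : ∀ j ∈ Finset.univ.erase j0,
        (if j = j0 then ({d0} : Finset F) else S').card = S'.card := by
      intro j hj
      rw [if_neg (Finset.mem_erase.mp hj).1]
    rw [Finset.prod_congr rfl h1, if_pos rfl, Finset.card_singleton, mul_one]
    rw [← Finset.prod_erase_mul _ _ (Finset.mem_univ j0)]
  calc _ ≤ T.card * S'.card := Nat.mul_le_mul_right _ hcard
    _ ≤ _ := hTcard
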